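/- (Deterministic oracle inequality under the smooth relative signal margin condition.) Let ε ∈ [0,1], α > 0, C_α > 0. Suppose the triple (P_X, η, η̃) satisfies: for all κ > 0, P_X({x : M(x; η, η̃) ≤ κ}) ≤ C_α·κ^α + ε. Then for any measurable classifier f : 𝒳 → {1,…,K}: R(f) − R(f*) ≤ ε + inf_{κ > 0} { C_α·κ^α + (1/κ)·(R̃(f) − R̃(f̃*)) }. -/

import Mathlib

open MeasureTheory ENNReal

noncomputable section

/-- The probability simplex `Δ^K`. -/
def simplex (K : ℕ) : Set (Fin K → ℝ) :=
  {p | (∀ i, 0 ≤ p i) ∧ ∑ i, p i = 1}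

/-- Relative signal strength `M(x; η, η̃)`, where any ratio with zero denominator
(including `0/0`) is taken to be `+∞`. -/
def RSS {K : ℕ} (η ηt : Fin K → ℝ) : ℝ≥0∞ :=
  ⨅ j : Fin K,
    if (⨆ i, η i) - η j = 0 then ⊤
    else ENNReal.ofReal (((⨆ i, ηt i) - ηt j) / ((⨆ i, η i) - η j))

/-- The risk `R(f) = ∫ (1 - [η(x)]_{f(x)}) dP_X(x)` of a classifier `f`. -/
def risk {X : Type*} [MeasurableSpace X] {K : ℕ} (P : Measure X)
    (η : X → Fin K → ℝ) (f : X → Fin K) : ℝ :=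
  ∫ x, (1 - η x (f x)) ∂P

/-- The Bayes risk `R(f^*) = ∫ (1 - max_i [η(x)]_i) dP_X(x)`. -/
def bayesRisk {X : Type*} [MeasurableSpace X] {K : ℕ} (P : Measure X)
    (η : X → Fin K → ℝ) : ℝ :=
  ∫ x, (1 - ⨆ i, η x i) ∂P

section Aux

variable {X : Type*} [MeasurableSpace X] {K : ℕ}

lemma measurable_fin_ciSup [Nonempty (Fin K)] (η : X → Fin K → ℝ)
    (hm : ∀ i, Measurable fun x => η x i) :
    Measurable fun x => ⨆ i, η x i := by
  have : (fun x => ⨆ i, η x i)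
      = Finset.univ.sup' Finset.univ_nonempty (fun i x => η x i) := by
    funext x
    rw [Finset.sup'_apply, Finset.sup'_univ_eq_ciSup]
  rw [this]
  exact Finset.measurable_sup' _ fun i _ => hm i

lemma measurable_comp_eval (η : X → Fin K → ℝ) (f : X → Fin K)
    (hm : ∀ i, Measurable fun x => η x i) (hf : Measurable f) :
    Measurable fun x => η x (f x) := by
  have : (fun x => η x (f x)) = fun x => ∑ i, if f x = i then η x i else 0 := by
    funext x; simp
  rw [this]
  exact Finset.measurable_sum _ fun i _ => Measurable.ite
    (hf (measurableSet_singleton i)) (hm i) measurable_const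

lemma excess_integral [Nonempty (Fin K)] (P : Measure X) [IsProbabilityMeasure P]
    (η : X → Fin K → ℝ) (f : X → Fin K)
    (hη : ∀ x, η x ∈ simplex K)
    (hm : ∀ i, Measurable fun x => η x i) (hf : Measurable f) :
    risk P η f - bayesRisk P η = ∫ x, ((⨆ i, η x i) - η x (f x)) ∂P := by
  have hb : ∀ x i, 0 ≤ η x i ∧ η x i ≤ 1 := by
    intro x i
    obtain ⟨h0, h1⟩ := hη x
    refine ⟨h0 i, ?_⟩
    calc η x i ≤ ∑ j, η x j :=
      Finset.single_le_sum (fun j _ => h0 j) (Finset.mem_univ i)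
    _ = 1 := h1
  have hsup : ∀ x, (⨆ i, η x i) ≤ 1 := fun x => ciSup_le fun i => (hb x i).2
  have hsup0 : ∀ x j, η x j ≤ ⨆ i, η x i := fun x j =>
    le_ciSup (Set.finite_range _).bddAbove j
  have h1 : Integrable (fun x => 1 - η x (f x)) P := by
    refine Integrable.mono' (integrable_const 1)
      ((measurable_const.sub (measurable_comp_eval η f hm hf)).aestronglyMeasurable)
      (ae_of_all _ fun x => ?_)
    have := hb x (f x)
    rw [Real.norm_eq_abs, abs_le]; constructor <;> linarith [this.1, this.2]
  have h2 : Integrable (fun x => 1 - ⨆ i, η x i) P := by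
    refine Integrable.mono' (integrable_const 1)
      ((measurable_const.sub (measurable_fin_ciSup η hm)).aestronglyMeasurable)
      (ae_of_all _ fun x => ?_)
    have ha := hsup x
    have hc := (hb x (Classical.arbitrary (Fin K))).1
    have hd := hsup0 x (Classical.arbitrary (Fin K))
    rw [Real.norm_eq_abs, abs_le]; constructor <;> linarith
  rw [risk, bayesRisk, ← integral_sub h1 h2]
  congr 1; funext x; ring

end Aux

/-- Deterministic oracle inequality under the `(ε, α, C_α)`-smooth relative signal
margin condition: for any classifier `f`,
`R(f) - R(f*) ≤ ε + inf_{κ>0} {C_α κ^α + (1/κ)(R̃(f) - R̃(f̃*))}`. -/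
theorem oracle_inequality_smooth_margin
    {X : Type*} [MeasurableSpace X] (K : ℕ) (hK : 2 ≤ K)
    (ε α Cα : ℝ) (hε : ε ∈ Set.Icc (0 : ℝ) 1) (hα : 0 < α) (hCα : 0 < Cα)
    (P : Measure X) [IsProbabilityMeasure P]
    (η ηt : X → Fin K → ℝ)
    (hη : ∀ x, η x ∈ simplex K) (hηt : ∀ x, ηt x ∈ simplex K)
    (hηm : ∀ i, Measurable fun x => η x i) (hηtm : ∀ i, Measurable fun x => ηt x i)
    (hmargin : ∀ κ : ℝ, 0 < κ →
      (P {x | RSS (η x) (ηt x) ≤ ENNReal.ofReal κ}).toReal ≤ Cα * κ ^ α + ε)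
    (f : X → Fin K) (hf : Measurable f) :
    risk P η f - bayesRisk P η ≤
      ε + ⨅ κ : {κ : ℝ // 0 < κ},
        (Cα * (κ : ℝ) ^ α + (1 / (κ : ℝ)) * (risk P ηt f - bayesRisk P ηt)) := by
  haveI : Nonempty (Fin K) := ⟨⟨0, by omega⟩⟩
  set g : X → ℝ := fun x => (⨆ i, η x i) - η x (f x) with hg
  set gt : X → ℝ := fun x => (⨆ i, ηt x i) - ηt x (f x) with hgt
  -- basic bounds
  have hb : ∀ (ρ : X → Fin K → ℝ), (∀ x, ρ x ∈ simplex K) →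
      ∀ x, (∀ j, ρ x j ≤ ⨆ i, ρ x i) ∧ (⨆ i, ρ x i) ≤ 1 ∧ ∀ j, 0 ≤ ρ x j := by
    intro ρ hρ x
    obtain ⟨h0, h1⟩ := hρ x
    have hle1 : ∀ i, ρ x i ≤ 1 := by
      intro i
      calc ρ x i ≤ ∑ j, ρ x j :=
        Finset.single_le_sum (fun j _ => h0 j) (Finset.mem_univ i)
      _ = 1 := h1
    exact ⟨fun j => le_ciSup (Set.finite_range _).bddAbove j,
      ciSup_le fun i => hle1 i, h0⟩
  have hg0 : ∀ x, 0 ≤ g x := fun x => sub_nonneg.2 ((hb η hη x).1 (f x))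
  have hg1 : ∀ x, g x ≤ 1 := by
    intro x
    have := (hb η hη x).2.1
    have := (hb η hη x).2.2 (f x)
    simp only [hg]; linarith
  have hgt0 : ∀ x, 0 ≤ gt x := fun x => sub_nonneg.2 ((hb ηt hηt x).1 (f x))
  -- measurability
  have hgm : Measurable g :=
    (measurable_fin_ciSup η hηm).sub (measurable_comp_eval η f hηm hf)
  have hgtm : Measurable gt :=
    (measurable_fin_ciSup ηt hηtm).sub (measurable_comp_eval ηt f hηtm hf)
  have hgint : Integrable g P := by
    refine Integrable.mono' (integrable_const 1) hgm.aestronglyMeasurable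
      (ae_of_all _ fun x => ?_)
    rw [Real.norm_eq_abs, abs_le]
    exact ⟨by linarith [hg0 x], hg1 x⟩
  have hgtint : Integrable gt P := by
    refine Integrable.mono' (integrable_const 1) hgtm.aestronglyMeasurable
      (ae_of_all _ fun x => ?_)
    have h1 := (hb ηt hηt x).2.1
    have h2 := (hb ηt hηt x).2.2 (f x)
    rw [Real.norm_eq_abs, abs_le]
    constructor <;> [skip; simp only [hgt]] <;> [linarith [hgt0 x]; linarith]
  -- integral identities
  have hI : risk P η f - bayesRisk P η = ∫ x, g x ∂P :=
    excess_integral P η f hη hηm hf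
  have hIt : risk P ηt f - bayesRisk P ηt = ∫ x, gt x ∂P :=
    excess_integral P ηt f hηt hηtm hf
  -- RSS measurability
  have hRSSm : Measurable fun x => RSS (η x) (ηt x) := by
    apply Measurable.iInf
    intro j
    refine Measurable.ite ?_ measurable_const
      (ENNReal.measurable_ofReal.comp
        (((measurable_fin_ciSup ηt hηtm).sub (hηtm j)).div
          ((measurable_fin_ciSup η hηm).sub (hηm j))))
    exact ((measurable_fin_ciSup η hηm).sub (hηm j)) (measurableSet_singleton 0)
  -- main estimate for each κ
  have key : ∀ κ : ℝ, 0 < κ →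
      risk P η f - bayesRisk P η ≤
        Cα * κ ^ α + ε + (1 / κ) * (risk P ηt f - bayesRisk P ηt) := by
    intro κ hκ
    set A : Set X := {x | RSS (η x) (ηt x) ≤ ENNReal.ofReal κ} with hA
    have hAmeas : MeasurableSet A := hRSSm measurableSet_Iic
    have hpt : ∀ x, g x ≤ A.indicator (fun _ => (1 : ℝ)) x + (1 / κ) * gt x := by
      intro x
      by_cases hx : x ∈ A
      · have : A.indicator (fun _ => (1 : ℝ)) x = 1 := Set.indicator_of_mem hx _
        rw [this]
        exact (hg1 x).trans (le_add_of_nonneg_right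
          (mul_nonneg (by positivity : (0:ℝ) ≤ 1/κ) (hgt0 x)))
      · have hind : A.indicator (fun _ => (1 : ℝ)) x = 0 := Set.indicator_of_notMem hx _
        rw [hind, zero_add]
        have hlt : ENNReal.ofReal κ < RSS (η x) (ηt x) := lt_of_not_ge hx
        have hlt2 : ENNReal.ofReal κ <
            if (⨆ i, η x i) - η x (f x) = 0 then ⊤
            else ENNReal.ofReal (((⨆ i, ηt x i) - ηt x (f x)) / ((⨆ i, η x i) - η x (f x))) :=
          lt_of_lt_of_le hlt (iInf_le _ (f x))
        by_cases hden : (⨆ i, η x i) - η x (f x) = 0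
        · have : g x = 0 := hden
          rw [this]
          exact mul_nonneg (by positivity) (hgt0 x)
        · rw [if_neg hden] at hlt2
          have hgpos : 0 < g x := lt_of_le_of_ne (hg0 x) (Ne.symm hden)
          have hr : κ < gt x / g x := by
            by_contra h
            push_neg at h
            exact absurd (ENNReal.ofReal_le_ofReal h) (not_le.2 hlt2)
          rw [lt_div_iff₀ hgpos] at hr
          rw [one_div, ← div_eq_inv_mul, le_div_iff₀ hκ, mul_comm]
          exact le_of_lt hr
    have hintA : Integrable (A.indicator (fun _ => (1 : ℝ))) P :=
      (integrable_const 1).indicator hAmeas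
    have hsum : ∫ x, g x ∂P ≤ ∫ x, (A.indicator (fun _ => (1 : ℝ)) x + (1 / κ) * gt x) ∂P :=
      integral_mono hgint (hintA.add (hgtint.const_mul _)) hpt
    have hiA : ∫ a, A.indicator (fun _ => (1:ℝ)) a ∂P = (P A).toReal := by
      rw [integral_indicator_const (1:ℝ) hAmeas]; simp; rfl
    rw [integral_add hintA (hgtint.const_mul _), integral_const_mul, hiA] at hsum
    have hm := hmargin κ hκ
    rw [hI, hIt]
    calc ∫ x, g x ∂P ≤ (P A).toReal + (1 / κ) * ∫ x, gt x ∂P := hsum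
    _ ≤ Cα * κ ^ α + ε + (1 / κ) * ∫ x, gt x ∂P := by linarith
  -- conclude via le_ciInf
  have : risk P η f - bayesRisk P η - ε ≤
      ⨅ κ : {κ : ℝ // 0 < κ},
        (Cα * (κ : ℝ) ^ α + (1 / (κ : ℝ)) * (risk P ηt f - bayesRisk P ηt)) := by
    haveI : Nonempty {κ : ℝ // 0 < κ} := ⟨⟨1, one_pos⟩⟩
    refine le_ciInf fun κ => ?_
    have := key κ.1 κ.2
    linarith
  linarith
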